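/- Every computable lower bound for Kolmogorov complexity is bounded: if g is a total computable function from binary strings to ℕ such that g(x) ≤ K(x) for all x, then g is bounded from above by a constant. -/

import Mathlib

/-- Plain Kolmogorov complexity of `x` with respect to decompressor `D`. -/
noncomputable def Kc (D : List Bool →. List Bool) (x : List Bool) : ℕ∞ :=
  sInf {n : ℕ∞ | ∃ p : List Bool, x ∈ D p ∧ (p.length : ℕ∞) = n}

/-- `U` is an optimal decompressor. -/
def OptimalDecompressor (U : List Bool →. List Bool) : Prop :=
  Partrec U ∧ ∀ D : List Bool →. List Bool, Partrec D →
    ∃ c : ℕ, ∀ x : List Bool, Kc U x ≤ Kc D x + (c : ℕ∞)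

/-- Interpret a list of bits (little endian) as a natural number. -/
def natOfBits (p : List Bool) : ℕ := p.foldr (fun b acc => 2 * acc + cond b 1 0) 0

lemma natOfBits_bits (n : ℕ) : natOfBits n.bits = n := by
  induction n using Nat.binaryRec' with
  | zero => simp [natOfBits]
  | bit b n h ih =>
    rw [Nat.bits_append_bit _ _ h]
    show 2 * natOfBits n.bits + cond b 1 0 = Nat.bit b n
    rw [ih, Nat.bit_val]
    cases b <;> rfl

lemma primrec_natOfBits : Primrec natOfBits := by
  have : Primrec fun p : List Bool =>
      p.foldr (fun b s => (fun (_ : List Bool) (q : Bool × ℕ) => 2 * q.2 + cond q.1 1 0) p (b, s))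
        ((fun _ : List Bool => 0) p) :=
    Primrec.list_foldr .id (Primrec.const 0)
      (Primrec.to₂ <|
        Primrec.nat_add.comp
          (Primrec.nat_mul.comp (Primrec.const 2) (Primrec.snd.comp Primrec.snd))
          (Primrec.cond (Primrec.fst.comp Primrec.snd) (Primrec.const 1) (Primrec.const 0)))
  exact this.of_eq fun p => rfl

/-- Search predicate: does code `k` decode to a string of `g`-value at least `natOfBits p`? -/
def searchFn (g : List Bool → ℕ) (p : List Bool) (k : ℕ) : Bool :=
  ((Encodable.decode (α := List Bool) k).map fun x => decide (natOfBits p ≤ g x)).getD false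

set_option maxHeartbeats 1000000 in
lemma computable_searchFn {g : List Bool → ℕ} (hg : Computable g) :
    Computable₂ (searchFn g) := by
  have h1 : Computable fun pk : List Bool × ℕ =>
      (Encodable.decode (α := List Bool) pk.2).map fun x => decide (natOfBits pk.1 ≤ g x) :=
    Computable.option_map (Computable.decode.comp Computable.snd)
      (Computable.to₂ <|
        (Primrec.to_comp (Primrec₂.comp Primrec.nat_le.decide
            (primrec_natOfBits.comp Primrec.fst) Primrec.snd)).comp
          ((Computable.fst.comp Computable.fst).pair (hg.comp Computable.snd)))
  have h2 : Computable fun pk : List Bool × ℕ =>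
      ((Encodable.decode (α := List Bool) pk.2).map
        fun x => decide (natOfBits pk.1 ≤ g x)).getD false :=
    Computable₂.comp (Primrec₂.to_comp Primrec.option_getD) h1 (Computable.const false)
  exact h2

/-- The decompressor searching for a string of large `g`-value. -/
def searchD (g : List Bool → ℕ) : List Bool →. List Bool := fun p =>
  (Nat.rfind ↑(searchFn g p)).map fun k =>
    (Encodable.decode (α := List Bool) k).getD []

lemma partrec_searchD {g : List Bool → ℕ} (hg : Computable g) : Partrec (searchD g) := by
  apply Partrec.map
  · exact Partrec.rfind ((computable_searchFn hg).partrec₂)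
  · exact Computable.to₂ <|
      (Primrec.to_comp (Primrec₂.comp Primrec.option_getD Primrec.decode (Primrec.const []))).comp
        Computable.snd

/-- Every computable lower bound for Kolmogorov complexity is bounded from
above by a constant. -/
theorem computable_lower_bound_bounded
    (U : List Bool →. List Bool) (hU : OptimalDecompressor U)
    (g : List Bool → ℕ) (hg : Computable g)
    (hlb : ∀ x : List Bool, (g x : ℕ∞) ≤ Kc U x) :
    ∃ c : ℕ, ∀ x : List Bool, g x ≤ c := by
  by_contra hbd
  push_neg at hbd
  obtain ⟨c, hc⟩ := hU.2 (searchD g) (partrec_searchD hg)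
  -- key: for every n there is x ∈ searchD g (n.bits) with n ≤ g x
  have key : ∀ n : ℕ, ∃ x : List Bool, x ∈ searchD g n.bits ∧ n ≤ g x := by
    intro n
    obtain ⟨x0, hx0⟩ := hbd n
    have hsf : searchFn g n.bits (Encodable.encode x0) = true := by
      simp [searchFn, Encodable.encodek, natOfBits_bits]
      omega
    obtain ⟨k, hk, -⟩ := Nat.rfind_min' (p := searchFn g n.bits) hsf
    have hspec : searchFn g n.bits k = true :=
      (Part.mem_some_iff.1 (Nat.rfind_spec hk)).symm
    unfold searchFn at hspec
    rcases hdec : Encodable.decode (α := List Bool) k with _ | x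
    · rw [hdec] at hspec; simp at hspec
    · rw [hdec] at hspec
      simp only [Option.map_some, Option.getD_some, decide_eq_true_eq] at hspec
      refine ⟨x, ?_, by rwa [natOfBits_bits] at hspec⟩
      refine Part.mem_map_iff _ |>.2 ⟨k, hk, ?_⟩
      rw [hdec]; rfl
  -- hence n ≤ n.size + c for all n
  have hineq : ∀ n : ℕ, n ≤ n.size + c := by
    intro n
    obtain ⟨x, hxD, hxg⟩ := key n
    have h1 : Kc (searchD g) x ≤ (n.size : ℕ∞) := by
      apply sInf_le
      refine ⟨n.bits, hxD, ?_⟩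
      rw [Nat.size_eq_bits_len]
    have h2 : (n : ℕ∞) ≤ (g x : ℕ∞) := by exact_mod_cast hxg
    have h3 : (n : ℕ∞) ≤ ((n.size + c : ℕ) : ℕ∞) := by
      calc (n : ℕ∞) ≤ (g x : ℕ∞) := h2
        _ ≤ Kc U x := hlb x
        _ ≤ Kc (searchD g) x + (c : ℕ∞) := hc x
        _ ≤ (n.size : ℕ∞) + (c : ℕ∞) := add_le_add_left h1 _
        _ = ((n.size + c : ℕ) : ℕ∞) := by rw [Nat.cast_add]
    exact_mod_cast h3
  -- contradiction with n = 2 ^ (c + 2)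
  have h := hineq (2 ^ (c + 2))
  rw [Nat.size_pow] at h
  have h2 : c < 2 ^ c := Nat.lt_two_pow_self
  have h3 : 2 ^ (c + 2) = 4 * 2 ^ c := by ring
  omega
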